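/- Let H be a simple graph on vertex set {1,…,n} with maximum degree at most d ≥ 1. Suppose events A₁,…,A_n in a probability space satisfy P(A_i) ≤ 1/(4d) for all i, and each A_i is mutually independent of the collection {A_j : j not adjacent to i in H}. Then P(complement of A₁ ∩ … ∩ complement of A_n) > 0. -/

import Mathlib

open MeasureTheory ProbabilityTheory
open scoped ENNReal

/-- Symmetric Lovász Local Lemma with dependency graph `H` on `{1,…,n}`: if each event
`A i` has probability at most `1/(4d)`, `H` has maximum degree at most `d`, and each
`A i` is mutually independent of the collection of events at non-adjacent indices, then
with positive probability none of the events occurs. -/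
theorem lovasz_local_lemma {Ω : Type} [MeasurableSpace Ω] (μ : Measure Ω)
    [IsProbabilityMeasure μ] (n d : ℕ) (hd : 1 ≤ d) (H : SimpleGraph (Fin n))
    [DecidableRel H.Adj] (hH : H.maxDegree ≤ d) (A : Fin n → Set Ω)
    (hmeas : ∀ i, MeasurableSet (A i)) (hp : ∀ i, μ (A i) ≤ 1 / (4 * d))
    (hind : ∀ i : Fin n,
      Indep (MeasurableSpace.generateFrom {A i})
        (MeasurableSpace.generateFrom {s | ∃ j : Fin n, ¬ H.Adj i j ∧ j ≠ i ∧ s = A j})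
        μ) :
    0 < μ (⋂ i, (A i)ᶜ) := by
  classical
  set C : Finset (Fin n) → Set Ω := fun S => ⋂ j ∈ S, (A j)ᶜ with hC
  have hCmeas : ∀ S : Finset (Fin n), MeasurableSet (C S) := fun S =>
    Finset.measurableSet_biInter S (fun j _ => (hmeas j).compl)
  have hCfin : ∀ S : Finset (Fin n), μ (C S) ≠ ⊤ := fun S => measure_ne_top μ _
  have hdE : (d : ℝ≥0∞) ≠ 0 := Nat.cast_ne_zero.mpr (by omega)
  have hdtop : (d : ℝ≥0∞) ≠ ⊤ := ENNReal.natCast_ne_top d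
  -- key claim by strong induction on the size of S
  have key : ∀ N : ℕ, ∀ S : Finset (Fin n), S.card ≤ N →
      0 < μ (C S) ∧ ∀ i ∉ S, μ (A i ∩ C S) ≤ μ (C S) / (2 * d) := by
    intro N
    induction N with
    | zero =>
      intro S hS
      have : S = ∅ := Finset.card_eq_zero.mp (Nat.le_zero.mp hS)
      subst this
      constructor
      · simp [hC, measure_univ]
      · intro i _
        simp only [hC, Finset.notMem_empty, Set.iInter_of_empty, Set.iInter_univ,
          Set.inter_univ]
        calc μ (A i) ≤ 1 / (4 * d) := hp i
          _ ≤ 1 / (2 * d) := by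
            apply ENNReal.div_le_div_left
            gcongr
            norm_num
          _ = μ Set.univ / (2 * d) := by rw [measure_univ]
    | succ N ih =>
      intro S hS
      -- second part first, as a general statement needing only IH on smaller sets
      have part2 : ∀ i ∉ S, μ (A i ∩ C S) ≤ μ (C S) / (2 * d) := by
        intro i hiS
        set S1 : Finset (Fin n) := S.filter (fun j => H.Adj i j) with hS1
        set S2 : Finset (Fin n) := S.filter (fun j => ¬ H.Adj i j) with hS2
        have hS12 : C S = C S1 ∩ C S2 := by
          simp only [hC]
          ext x
          simp only [Set.mem_inter_iff, Set.mem_iInter, Set.mem_compl_iff]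
          constructor
          · intro h
            exact ⟨fun j hj => h j (Finset.mem_filter.mp hj).1,
              fun j hj => h j (Finset.mem_filter.mp hj).1⟩
          · rintro ⟨h1, h2⟩ j hj
            by_cases ha : H.Adj i j
            · exact h1 j (Finset.mem_filter.mpr ⟨hj, ha⟩)
            · exact h2 j (Finset.mem_filter.mpr ⟨hj, ha⟩)
        -- independence: μ (A i ∩ C S2) = μ (A i) * μ (C S2)
        have hindep : μ (A i ∩ C S2) = μ (A i) * μ (C S2) := by
          have h1 : MeasurableSet[MeasurableSpace.generateFrom {A i}] (A i) :=
            MeasurableSpace.measurableSet_generateFrom rfl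
          have h2 : MeasurableSet[MeasurableSpace.generateFrom
              {s | ∃ j : Fin n, ¬ H.Adj i j ∧ j ≠ i ∧ s = A j}] (C S2) := by
            apply Finset.measurableSet_biInter
            intro j hj
            apply MeasurableSet.compl
            apply MeasurableSpace.measurableSet_generateFrom
            rw [Finset.mem_filter] at hj
            exact ⟨j, hj.2, fun h => hiS (h ▸ hj.1), rfl⟩
          exact ((Indep_iff _ _ μ).mp (hind i)) _ _ h1 h2
        have hAiC2 : μ (A i ∩ C S2) ≤ μ (C S2) / (4 * d) := by
          rw [hindep]
          calc μ (A i) * μ (C S2) ≤ 1 / (4 * d) * μ (C S2) := by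
                gcongr; exact hp i
            _ = μ (C S2) / (4 * d) := by
                rw [one_div, ENNReal.div_eq_inv_mul]
        by_cases hS1e : S1 = ∅
        · -- no neighbours in S: C S = C S2
          have : C S = C S2 := by
            rw [hS12, hS1e]
            simp [hC]
          rw [this]
          calc μ (A i ∩ C S2) ≤ μ (C S2) / (4 * d) := hAiC2
            _ ≤ μ (C S2) / (2 * d) := by
              apply ENNReal.div_le_div_left
              gcongr; norm_num
        · -- some neighbour in S
          have hS2card : S2.card ≤ N := by
            have hlt : S2.card < S.card := by
              apply Finset.card_lt_card
              constructor
              · exact Finset.filter_subset _ _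
              · intro hsub
                obtain ⟨j, hj⟩ := Finset.nonempty_of_ne_empty hS1e
                rw [hS1, Finset.mem_filter] at hj
                have := hsub hj.1
                rw [hS2, Finset.mem_filter] at this
                exact this.2 hj.2
            omega
          obtain ⟨hpos2, hIH2⟩ := ih S2 hS2card
          -- μ (C S2) ≤ 2 * μ (C S)
          have hsplit : μ (C S2) = μ ((⋃ j ∈ S1, A j) ∩ C S2) + μ (C S) := by
            have hmU : MeasurableSet (⋃ j ∈ S1, A j) :=
              Finset.measurableSet_biUnion S1 (fun j _ => hmeas j)
            have hset : C S2 \ (⋃ j ∈ S1, A j) = C S := by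
              ext x
              simp only [hC, Set.mem_diff, Set.mem_iUnion, Set.mem_iInter,
                Set.mem_compl_iff, not_exists]
              constructor
              · rintro ⟨h1, h2⟩ j hj
                by_cases ha : H.Adj i j
                · exact fun hx => h2 j (Finset.mem_filter.mpr ⟨hj, ha⟩) hx
                · exact h1 j (Finset.mem_filter.mpr ⟨hj, ha⟩)
              · intro h
                refine ⟨fun j hj => h j (Finset.mem_filter.mp hj).1, ?_⟩
                intro j hj hx
                exact h j (Finset.mem_filter.mp hj).1 hx
            calc μ (C S2) = μ (C S2 ∩ (⋃ j ∈ S1, A j)) + μ (C S2 \ (⋃ j ∈ S1, A j)) :=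
                  (measure_inter_add_diff _ hmU).symm
              _ = μ ((⋃ j ∈ S1, A j) ∩ C S2) + μ (C S) := by
                  rw [Set.inter_comm, hset]
          have hunion : μ ((⋃ j ∈ S1, A j) ∩ C S2) ≤ μ (C S2) / 2 := by
            calc μ ((⋃ j ∈ S1, A j) ∩ C S2) = μ (⋃ j ∈ S1, (A j ∩ C S2)) := by
                  rw [Set.iUnion₂_inter]
              _ ≤ ∑ j ∈ S1, μ (A j ∩ C S2) := measure_biUnion_finset_le S1 _
              _ ≤ ∑ j ∈ S1, μ (C S2) / (2 * d) := by
                  apply Finset.sum_le_sum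
                  intro j hj
                  apply hIH2
                  rw [hS1, Finset.mem_filter] at hj
                  rw [hS2, Finset.mem_filter]
                  push_neg
                  intro _
                  exact hj.2
              _ = S1.card * (μ (C S2) / (2 * d)) := by
                  rw [Finset.sum_const, nsmul_eq_mul]
              _ ≤ d * (μ (C S2) / (2 * d)) := by
                  gcongr
                  have h1 : S1 ⊆ H.neighborFinset i := by
                    intro j hj
                    rw [hS1, Finset.mem_filter] at hj
                    exact (SimpleGraph.mem_neighborFinset H i j).mpr hj.2
                  have h2 : S1.card ≤ d := le_trans (Finset.card_le_card h1)
                    (le_trans (H.degree_le_maxDegree i) hH)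
                  exact_mod_cast h2
              _ = μ (C S2) / 2 := by
                  rw [mul_comm (2 : ℝ≥0∞) (d : ℝ≥0∞), ← mul_div_assoc]
                  exact ENNReal.mul_div_mul_left _ _ hdE hdtop
          have hC2le : μ (C S2) ≤ 2 * μ (C S) := by
            have h1 : μ (C S2) ≤ μ (C S2) / 2 + μ (C S) :=
              hsplit.le.trans (add_le_add_left hunion _)
            have h2 : μ (C S2) - μ (C S2) / 2 ≤ μ (C S) :=
              tsub_le_iff_right.mpr (by rwa [add_comm] at h1)
            rw [ENNReal.sub_half (hCfin S2)] at h2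
            calc μ (C S2) = 2 * (μ (C S2) / 2) := by
                  rw [ENNReal.mul_div_cancel' (by norm_num) (by norm_num)]
              _ ≤ 2 * μ (C S) := by gcongr
          calc μ (A i ∩ C S) ≤ μ (A i ∩ C S2) := by
                apply measure_mono
                rw [hS12]
                exact Set.inter_subset_inter_right _ (Set.inter_subset_right)
            _ ≤ μ (C S2) / (4 * d) := hAiC2
            _ ≤ 2 * μ (C S) / (4 * d) := by gcongr
            _ = μ (C S) / (2 * d) := by
                rw [show (4 : ℝ≥0∞) * d = 2 * (2 * d) by ring]
                exact ENNReal.mul_div_mul_left _ _ (by norm_num) (by norm_num)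
      refine ⟨?_, part2⟩
      rcases Finset.eq_empty_or_nonempty S with rfl | ⟨i, hi⟩
      · simp [hC, measure_univ]
      · set S' := S.erase i with hS'
        have hcard : S'.card ≤ N := by
          rw [hS', Finset.card_erase_of_mem hi]
          omega
        obtain ⟨hpos', hIH'⟩ := ih S' hcard
        have hAi : μ (A i ∩ C S') ≤ μ (C S') / 2 := by
          calc μ (A i ∩ C S') ≤ μ (C S') / (2 * d) := hIH' i (Finset.notMem_erase i S)
            _ ≤ μ (C S') / 2 := by
              apply ENNReal.div_le_div_left
              calc (2 : ℝ≥0∞) = 2 * 1 := by norm_num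
                _ ≤ 2 * d := by gcongr; exact_mod_cast hd
        have hsplit : μ (C S') = μ (A i ∩ C S') + μ (C S) := by
          have hset : C S' \ A i = C S := by
            have hins : S = insert i S' := by rw [hS', Finset.insert_erase hi]
            ext x
            simp only [hC, hins, Set.mem_diff, Set.mem_iInter, Set.mem_compl_iff,
              Finset.mem_insert]
            constructor
            · rintro ⟨h1, h2⟩ j (rfl | hj)
              · exact h2
              · exact h1 j hj
            · intro h
              exact ⟨fun j hj => h j (Or.inr hj), h i (Or.inl rfl)⟩
          calc μ (C S') = μ (C S' ∩ A i) + μ (C S' \ A i) :=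
                (measure_inter_add_diff _ (hmeas i)).symm
            _ = μ (A i ∩ C S') + μ (C S) := by rw [Set.inter_comm, hset]
        by_contra hle
        push_neg at hle
        have hz : μ (C S) = 0 := le_antisymm hle zero_le
        rw [hz, add_zero] at hsplit
        have : μ (C S') ≤ μ (C S') / 2 := hsplit.le.trans hAi
        have h2 : μ (C S') / 2 < μ (C S') :=
          ENNReal.half_lt_self hpos'.ne' (hCfin S')
        exact absurd this (not_le.mpr h2)
  have := (key (Finset.univ.card) Finset.univ le_rfl).1
  convert this using 2
  simp [hC]
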